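/- Suppose F is nonempty, O = {J_n} consists of a single open-shop job with processing time q_n satisfying p_max < q_n < P(F). Consider feasible schedules in which J_n is processed in machine order ⟨M2, M3, M1⟩, i.e., C_n^2 ≤ S_n^3 and C_n^3 ≤ S_n^1. Then every such schedule has makespan at least 2·q_n + P(F), and there exists such a schedule with makespan exactly 2·q_n + P(F). The same two assertions hold for schedules in which J_n is processed in machine order ⟨M3, M1, M2⟩, i.e., C_n^3 ≤ S_n^1 and C_n^1 ≤ S_n^2. -/
import Mathlib


open Finset

noncomputable section

/-- Processing time of a job: `p` on flow-shop jobs, `q` otherwise. -/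
def jobTime {J : Type*} [DecidableEq J] (F : Finset J) (p q : J → ℝ) (j : J) : ℝ :=
  if j ∈ F then p j else q j

/-- Feasibility of a schedule given by start times `S j i` of job `j` on machine `i`
(machines `M1, M2, M3` are machines `0, 1, 2`):
all start times are nonnegative, on each machine the open processing intervals of
distinct jobs are pairwise disjoint, for each job the open processing intervals on the
three machines are pairwise disjoint, and each flow-shop job goes through
`M1`, `M2`, `M3` in this order. -/
def Feasible {J : Type*} [DecidableEq J] (F O : Finset J) (p q : J → ℝ)
    (S : J → Fin 3 → ℝ) : Prop :=
  (∀ j ∈ F ∪ O, ∀ i : Fin 3, 0 ≤ S j i) ∧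
  (∀ i : Fin 3, ∀ j ∈ F ∪ O, ∀ k ∈ F ∪ O, j ≠ k →
    S j i + jobTime F p q j ≤ S k i ∨ S k i + jobTime F p q k ≤ S j i) ∧
  (∀ j ∈ F ∪ O, ∀ i i' : Fin 3, i ≠ i' →
    S j i + jobTime F p q j ≤ S j i' ∨ S j i' + jobTime F p q j ≤ S j i) ∧
  (∀ j ∈ F, S j 0 + p j ≤ S j 1 ∧ S j 1 + p j ≤ S j 2)

/-- Makespan: supremum of all completion times of the jobs of `F ∪ O`. -/
def makespan {J : Type*} [DecidableEq J] (F O : Finset J) (p q : J → ℝ)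
    (S : J → Fin 3 → ℝ) : ℝ :=
  sSup {x : ℝ | ∃ j ∈ F ∪ O, ∃ i : Fin 3, x = S j i + jobTime F p q j}

private lemma pack_aux {J : Type*} [DecidableEq J] (s L : J → ℝ) (a : ℝ) (T : Finset J) :
    ∀ b : ℝ, (∀ j ∈ T, 0 < L j) →
    (∀ j ∈ T, ∀ k ∈ T, j ≠ k → s j + L j ≤ s k ∨ s k + L k ≤ s j) →
    (∀ j ∈ T, a ≤ s j) → (∀ j ∈ T, s j + L j ≤ b) → a ≤ b →
    ∑ j ∈ T, L j ≤ b - a := by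
  induction T using Finset.strongInduction with
  | _ T ih =>
    intro b h1 h2 h3 h4 hab
    rcases T.eq_empty_or_nonempty with rfl | hne
    · simp; linarith
    · obtain ⟨j, hj, hmax⟩ := T.exists_max_image s hne
      have hkey : ∀ k ∈ T.erase j, s k + L k ≤ s j := by
        intro k hk
        have hkT := Finset.mem_of_mem_erase hk
        rcases h2 k hkT j hj (Finset.ne_of_mem_erase hk) with h | h
        · exact h
        · have h5 := hmax k hkT
          have h6 := h1 j hj
          linarith
      have hsum := ih (T.erase j) (Finset.erase_ssubset hj) (s j)
        (fun k hk => h1 k (Finset.mem_of_mem_erase hk))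
        (fun k hk l hl h => h2 k (Finset.mem_of_mem_erase hk) l (Finset.mem_of_mem_erase hl) h)
        (fun k hk => h3 k (Finset.mem_of_mem_erase hk))
        hkey (h3 j hj)
      have heq : ∑ k ∈ T, L k = L j + ∑ k ∈ T.erase j, L k := (Finset.add_sum_erase T L hj).symm
      have h7 := h4 j hj
      linarith

private lemma mkspanBdd {J : Type*} [DecidableEq J] (F O : Finset J) (p q : J → ℝ)
    (S : J → Fin 3 → ℝ) :
    BddAbove {x : ℝ | ∃ j ∈ F ∪ O, ∃ i : Fin 3, x = S j i + jobTime F p q j} := by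
  apply Set.Finite.bddAbove
  apply Set.Finite.subset (Set.Finite.image
    (fun ji : J × Fin 3 => S ji.1 ji.2 + jobTime F p q ji.1)
    ((F ∪ O).finite_toSet.prod Set.finite_univ))
  rintro x ⟨j, hj, i, rfl⟩
  exact ⟨(j, i), ⟨hj, trivial⟩, rfl⟩

private lemma lowerB {J : Type*} [DecidableEq J] (F : Finset J) (jn : J) (p q : J → ℝ)
    (hjnF : jn ∉ F) (hp : ∀ j ∈ F, 0 < p j) (hq : 0 < q jn)
    (S : J → Fin 3 → ℝ) (hfeas : Feasible F {jn} p q S)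
    (u v : Fin 3)
    (h0u : ∀ j ∈ F, S j 0 ≤ S j u)
    (huv : ∀ j ∈ F, S j u + p j ≤ S j v)
    (hv2 : ∀ j ∈ F, S j v ≤ S j 2)
    (hn : S jn u + q jn ≤ S jn v) :
    2 * q jn + (∑ j ∈ F, p j) ≤ makespan F {jn} p q S := by
  classical
  obtain ⟨h1, h2, h3, h4⟩ := hfeas
  have hjF : ∀ j ∈ F, j ∈ F ∪ {jn} := fun j hj => mem_union_left _ hj
  have hjnm : jn ∈ F ∪ {jn} := mem_union_right _ (mem_singleton_self jn)
  have hjt : ∀ j ∈ F, jobTime F p q j = p j := fun j hj => if_pos hj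
  have hjtn : jobTime F p q jn = q jn := if_neg hjnF
  set M := makespan F {jn} p q S with hM
  have hub : ∀ j ∈ F ∪ {jn}, ∀ i : Fin 3, S j i + jobTime F p q j ≤ M :=
    fun j hj i => le_csSup (mkspanBdd F {jn} p q S) ⟨j, hj, i, rfl⟩
  have dich : ∀ i : Fin 3, ∀ j ∈ F, S j i + p j ≤ S jn i ∨ S jn i + q jn ≤ S j i := by
    intro i j hj
    have h := h2 i j (hjF j hj) jn hjnm (fun hh => hjnF (hh ▸ hj))
    rwa [hjt j hj, hjtn] at h
  have mdisj : ∀ i : Fin 3, ∀ j ∈ F, ∀ k ∈ F, j ≠ k →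
      S j i + p j ≤ S k i ∨ S k i + p k ≤ S j i := by
    intro i j hj k hk hne
    have h := h2 i j (hjF j hj) k (hjF k hk) hne
    rwa [hjt j hj, hjt k hk] at h
  set A := F.filter (fun j => S j v + p j ≤ S jn v) with hA
  set X := A.filter (fun j => S j u + p j ≤ S jn u) with hX
  have hAF : ∀ j ∈ A, j ∈ F := fun j hj => mem_of_mem_filter j hj
  have hXA : ∀ j ∈ X, j ∈ A := fun j hj => mem_of_mem_filter j hj
  have packX : ∑ j ∈ X, p j ≤ S jn u - 0 := by
    apply pack_aux (fun j => S j 0) p 0 X (S jn u)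
    · exact fun j hj => hp j (hAF j (hXA j hj))
    · exact fun j hj k hk hne => mdisj 0 j (hAF j (hXA j hj)) k (hAF k (hXA k hk)) hne
    · exact fun j hj => h1 j (hjF j (hAF j (hXA j hj))) 0
    · intro j hj
      have hjf := hAF j (hXA j hj)
      have hx : S j u + p j ≤ S jn u := (mem_filter.mp hj).2
      have h5 := h0u j hjf
      linarith
    · exact h1 jn hjnm u
  have packY : ∑ j ∈ A \ X, p j ≤ S jn v - (S jn u + q jn) := by
    apply pack_aux (fun j => S j v) p (S jn u + q jn) (A \ X) (S jn v)
    · exact fun j hj => hp j (hAF j (mem_sdiff.mp hj).1)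
    · exact fun j hj k hk hne =>
        mdisj v j (hAF j (mem_sdiff.mp hj).1) k (hAF k (mem_sdiff.mp hk).1) hne
    · intro j hj
      obtain ⟨hjA, hjX⟩ := mem_sdiff.mp hj
      have hjf := hAF j hjA
      have hnx : ¬ (S j u + p j ≤ S jn u) := by
        intro hcon; exact hjX (mem_filter.mpr ⟨hjA, hcon⟩)
      rcases dich u j hjf with h | h
      · exact absurd h hnx
      · have h5 := huv j hjf
        have h6 := hp j hjf
        linarith
    · exact fun j hj => (mem_filter.mp (mem_sdiff.mp hj).1).2
    · exact hn
  have packB : ∑ j ∈ F \ A, p j ≤ M - (S jn v + q jn) := by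
    apply pack_aux (fun j => S j 2) p (S jn v + q jn) (F \ A) M
    · exact fun j hj => hp j (mem_sdiff.mp hj).1
    · exact fun j hj k hk hne =>
        mdisj 2 j (mem_sdiff.mp hj).1 k (mem_sdiff.mp hk).1 hne
    · intro j hj
      obtain ⟨hjf, hjA⟩ := mem_sdiff.mp hj
      have hnx : ¬ (S j v + p j ≤ S jn v) := by
        intro hcon; exact hjA (mem_filter.mpr ⟨hjf, hcon⟩)
      rcases dich v j hjf with h | h
      · exact absurd h hnx
      · have h5 := hv2 j hjf
        linarith
    · intro j hj
      have hjf := (mem_sdiff.mp hj).1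
      have h5 := hub j (hjF j hjf) 2
      rwa [hjt j hjf] at h5
    · have h5 := hub jn hjnm v
      rwa [hjtn] at h5
  have e1 : ∑ j ∈ A \ X, p j + ∑ j ∈ X, p j = ∑ j ∈ A, p j :=
    Finset.sum_sdiff (filter_subset _ A)
  have e2 : ∑ j ∈ F \ A, p j + ∑ j ∈ A, p j = ∑ j ∈ F, p j :=
    Finset.sum_sdiff (filter_subset _ F)
  linarith

private def rk {J : Type*} [DecidableEq J] (F : Finset J) (j : J) : ℕ :=
  if h : j ∈ F then ((F.equivFin) ⟨j, h⟩ : Fin F.card).val else 0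

private def pre {J : Type*} [DecidableEq J] (F : Finset J) (p : J → ℝ) (j : J) : ℝ :=
  ∑ k ∈ F.filter (fun k => rk F k < rk F j), p k

private lemma rk_ne {J : Type*} [DecidableEq J] {F : Finset J} {j k : J}
    (hj : j ∈ F) (hk : k ∈ F) (hne : j ≠ k) : rk F j ≠ rk F k := by
  unfold rk
  rw [dif_pos hj, dif_pos hk]
  intro h
  have h2 : (⟨j, hj⟩ : {x // x ∈ F}) = ⟨k, hk⟩ := F.equivFin.injective (Fin.ext h)
  exact hne (by simpa using h2)

private lemma pre_nonneg {J : Type*} [DecidableEq J] (F : Finset J) (p : J → ℝ)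
    (hp : ∀ j ∈ F, 0 < p j) (j : J) : 0 ≤ pre F p j :=
  Finset.sum_nonneg fun k hk => (hp k (mem_of_mem_filter k hk)).le

private lemma pre_add_le {J : Type*} [DecidableEq J] (F : Finset J) (p : J → ℝ)
    (hp : ∀ j ∈ F, 0 < p j) {j : J} (hj : j ∈ F) :
    pre F p j + p j ≤ ∑ k ∈ F, p k := by
  have hnot : j ∉ F.filter (fun k => rk F k < rk F j) := by simp
  have hsub : insert j (F.filter (fun k => rk F k < rk F j)) ⊆ F := by
    intro k hk
    rcases Finset.mem_insert.mp hk with rfl | hk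
    · exact hj
    · exact mem_of_mem_filter k hk
  calc pre F p j + p j
      = ∑ k ∈ insert j (F.filter (fun k => rk F k < rk F j)), p k := by
        rw [Finset.sum_insert hnot]; unfold pre; ring
    _ ≤ ∑ k ∈ F, p k :=
        Finset.sum_le_sum_of_subset_of_nonneg hsub (fun k hk _ => (hp k hk).le)

private lemma pre_sep {J : Type*} [DecidableEq J] (F : Finset J) (p : J → ℝ)
    (hp : ∀ j ∈ F, 0 < p j) {j k : J} (hj : j ∈ F) (hk : k ∈ F)
    (h : rk F j < rk F k) : pre F p j + p j ≤ pre F p k := by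
  have hnot : j ∉ F.filter (fun m => rk F m < rk F j) := by simp
  have hsub : insert j (F.filter (fun m => rk F m < rk F j)) ⊆
      F.filter (fun m => rk F m < rk F k) := by
    intro m hm
    rcases Finset.mem_insert.mp hm with rfl | hm
    · exact mem_filter.mpr ⟨hj, h⟩
    · obtain ⟨hmF, hmr⟩ := mem_filter.mp hm
      exact mem_filter.mpr ⟨hmF, hmr.trans h⟩
  calc pre F p j + p j
      = ∑ m ∈ insert j (F.filter (fun m => rk F m < rk F j)), p m := by
        rw [Finset.sum_insert hnot]; unfold pre; ring
    _ ≤ pre F p k :=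
        Finset.sum_le_sum_of_subset_of_nonneg hsub
          (fun m hm _ => (hp m (mem_of_mem_filter m hm)).le)
private lemma constructS {J : Type*} [DecidableEq J] (F : Finset J) (jn : J) (p q : J → ℝ)
    (hjnF : jn ∉ F) (hp : ∀ j ∈ F, 0 < p j) (hq : 0 < q jn) (hF : F.Nonempty)
    (hpq : F.sup' hF p < q jn)
    (t : Fin 3 → ℝ)
    (ht0 : ∀ i, 0 ≤ t i)
    (hm0 : (∑ j ∈ F, p j) ≤ t 0)
    (hm1 : t 1 + q jn ≤ q jn ∨ q jn + (∑ j ∈ F, p j) ≤ t 1)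
    (hm2 : t 2 + q jn ≤ 2 * q jn ∨ 2 * q jn + (∑ j ∈ F, p j) ≤ t 2)
    (hown : ∀ i i' : Fin 3, i ≠ i' → t i + q jn ≤ t i' ∨ t i' + q jn ≤ t i)
    (hcomp : ∀ i, t i + q jn ≤ 2 * q jn + ∑ j ∈ F, p j)
    (hwit : ∃ i, t i + q jn = 2 * q jn + ∑ j ∈ F, p j) :
    ∃ S : J → Fin 3 → ℝ, Feasible F {jn} p q S ∧ (∀ i, S jn i = t i) ∧
      makespan F {jn} p q S = 2 * q jn + ∑ j ∈ F, p j := by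
  classical
  set P := ∑ j ∈ F, p j with hP
  set c : Fin 3 → ℝ := fun i => if i = 0 then 0 else if i = 1 then q jn else 2 * q jn with hc
  have hcv0 : c 0 = 0 := by simp [hc]
  have hcv1 : c 1 = q jn := by simp [hc]
  have hcv2 : c 2 = 2 * q jn := by simp [hc]
  set S : J → Fin 3 → ℝ :=
    fun j i => if j = jn then t i else c i + pre F p j with hS
  have hSn : ∀ i, S jn i = t i := fun i => if_pos rfl
  have hSF : ∀ j ∈ F, ∀ i, S j i = c i + pre F p j :=
    fun j hj i => if_neg (fun h : j = jn => hjnF (h ▸ hj))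
  have hjt : ∀ j ∈ F, jobTime F p q j = p j := fun j hj => if_pos hj
  have hjtn : jobTime F p q jn = q jn := if_neg hjnF
  have hjnm : jn ∈ F ∪ ({jn} : Finset J) := mem_union_right _ (mem_singleton_self jn)
  have hpj : ∀ j ∈ F, p j < q jn := fun j hj => lt_of_le_of_lt (le_sup' p hj) hpq
  have hpre0 : ∀ j, 0 ≤ pre F p j := pre_nonneg F p hp
  have hpreP : ∀ j ∈ F, pre F p j + p j ≤ P := fun j hj => pre_add_le F p hp hj
  have hc0 : ∀ i : Fin 3, 0 ≤ c i := by
    intro i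
    fin_cases i
    · show (0:ℝ) ≤ c 0; rw [hcv0]
    · show (0:ℝ) ≤ c 1; rw [hcv1]; linarith
    · show (0:ℝ) ≤ c 2; rw [hcv2]; linarith
  have hmem : ∀ j ∈ F ∪ ({jn} : Finset J), j ∈ F ∨ j = jn := by
    intro j hj
    rcases mem_union.mp hj with h | h
    · exact Or.inl h
    · exact Or.inr (mem_singleton.mp h)
  have hfn : ∀ i : Fin 3, ∀ j ∈ F,
      c i + pre F p j + p j ≤ t i ∨ t i + q jn ≤ c i + pre F p j := by
    intro i j hj
    have h1 := hpreP j hj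
    have h2 := hpre0 j
    fin_cases i
    · left
      show c 0 + pre F p j + p j ≤ t 0
      rw [hcv0]; linarith
    · rcases hm1 with h | h
      · right
        show t 1 + q jn ≤ c 1 + pre F p j
        rw [hcv1]; linarith
      · left
        show c 1 + pre F p j + p j ≤ t 1
        rw [hcv1]; linarith
    · rcases hm2 with h | h
      · right
        show t 2 + q jn ≤ c 2 + pre F p j
        rw [hcv2]; linarith
      · left
        show c 2 + pre F p j + p j ≤ t 2
        rw [hcv2]; linarith
  refine ⟨S, ⟨?_, ?_, ?_, ?_⟩, hSn, ?_⟩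
  · intro j hj i
    rcases hmem j hj with h | rfl
    · rw [hSF j h i]
      have h1 := hpre0 j
      have h2 := hc0 i
      linarith
    · rw [hSn i]; exact ht0 i
  · intro i j hj k hk hne
    rcases hmem j hj with hjf | rfl
    · rcases hmem k hk with hkf | rfl
      · rw [hjt j hjf, hjt k hkf, hSF j hjf i, hSF k hkf i]
        rcases lt_or_gt_of_ne (rk_ne hjf hkf hne) with h | h
        · left
          have := pre_sep F p hp hjf hkf h
          linarith
        · right
          have := pre_sep F p hp hkf hjf h
          linarith
      · rw [hjt j hjf, hjtn, hSF j hjf i, hSn i]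
        exact hfn i j hjf
    · rcases hmem k hk with hkf | rfl
      · rw [hjt k hkf, hjtn, hSF k hkf i, hSn i]
        exact (hfn i k hkf).symm
      · exact absurd rfl hne
  · intro j hj i i' hii
    rcases hmem j hj with hjf | rfl
    · rw [hjt j hjf, hSF j hjf i, hSF j hjf i']
      have h1 := hpj j hjf
      have h2 := hp j hjf
      fin_cases i <;> fin_cases i'
      · exact absurd rfl hii
      · left; show c 0 + pre F p j + p j ≤ c 1 + pre F p j
        rw [hcv0, hcv1]; linarith
      · left; show c 0 + pre F p j + p j ≤ c 2 + pre F p j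
        rw [hcv0, hcv2]; linarith
      · right; show c 0 + pre F p j + p j ≤ c 1 + pre F p j
        rw [hcv0, hcv1]; linarith
      · exact absurd rfl hii
      · left; show c 1 + pre F p j + p j ≤ c 2 + pre F p j
        rw [hcv1, hcv2]; linarith
      · right; show c 0 + pre F p j + p j ≤ c 2 + pre F p j
        rw [hcv0, hcv2]; linarith
      · right; show c 1 + pre F p j + p j ≤ c 2 + pre F p j
        rw [hcv1, hcv2]; linarith
      · exact absurd rfl hii
    · rw [hjtn, hSn i, hSn i']
      exact hown i i' hii
  · intro j hj
    have h1 := hpj j hj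
    constructor
    · rw [hSF j hj 0, hSF j hj 1, hcv0, hcv1]
      linarith
    · rw [hSF j hj 1, hSF j hj 2, hcv1, hcv2]
      linarith
  · apply le_antisymm
    · apply csSup_le
      · exact ⟨S jn 0 + jobTime F p q jn, jn, hjnm, 0, rfl⟩
      · rintro x ⟨j, hj, i, rfl⟩
        rcases hmem j hj with hjf | rfl
        · rw [hjt j hjf, hSF j hjf i]
          have h1 := hpreP j hjf
          have h2 := hpre0 j
          fin_cases i
          · show c 0 + pre F p j + p j ≤ 2 * q jn + P
            rw [hcv0]; linarith
          · show c 1 + pre F p j + p j ≤ 2 * q jn + P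
            rw [hcv1]; linarith
          · show c 2 + pre F p j + p j ≤ 2 * q jn + P
            rw [hcv2]; linarith
        · rw [hjtn, hSn i]
          exact hcomp i
    · obtain ⟨i0, hi0⟩ := hwit
      apply le_csSup (mkspanBdd F {jn} p q S)
      exact ⟨jn, hjnm, i0, by rw [hSn i0, hjtn]; exact hi0.symm⟩

/-- Lemma 6.3: suppose `O = {jn}` with `p_max < q_n < P(F)`. Among the feasible
schedules in which `jn` is processed in machine order `⟨M2, M3, M1⟩`
(i.e. `C_n^2 ≤ S_n^3` and `C_n^3 ≤ S_n^1`), every one has makespan at least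
`2 q_n + P(F)` and one attains exactly `2 q_n + P(F)`; the same holds for the machine
order `⟨M3, M1, M2⟩` (i.e. `C_n^3 ≤ S_n^1` and `C_n^1 ≤ S_n^2`).
Machines `M1, M2, M3` are `0, 1, 2`. -/
theorem stmt16 {J : Type*} [DecidableEq J] (F : Finset J) (jn : J) (p q : J → ℝ)
    (hdisj : Disjoint F {jn})
    (hp : ∀ j ∈ F, 0 < p j) (hq : 0 < q jn)
    (hF : F.Nonempty)
    (hpq : F.sup' hF p < q jn) (hPF : q jn < ∑ j ∈ F, p j) :
    ((∀ S : J → Fin 3 → ℝ, Feasible F {jn} p q S →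
        S jn 1 + q jn ≤ S jn 2 → S jn 2 + q jn ≤ S jn 0 →
        2 * q jn + (∑ j ∈ F, p j) ≤ makespan F {jn} p q S) ∧
     (∃ S : J → Fin 3 → ℝ, Feasible F {jn} p q S ∧
        S jn 1 + q jn ≤ S jn 2 ∧ S jn 2 + q jn ≤ S jn 0 ∧
        makespan F {jn} p q S = 2 * q jn + ∑ j ∈ F, p j)) ∧
    ((∀ S : J → Fin 3 → ℝ, Feasible F {jn} p q S →
        S jn 2 + q jn ≤ S jn 0 → S jn 0 + q jn ≤ S jn 1 →
        2 * q jn + (∑ j ∈ F, p j) ≤ makespan F {jn} p q S) ∧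
     (∃ S : J → Fin 3 → ℝ, Feasible F {jn} p q S ∧
        S jn 2 + q jn ≤ S jn 0 ∧ S jn 0 + q jn ≤ S jn 1 ∧
        makespan F {jn} p q S = 2 * q jn + ∑ j ∈ F, p j)) := by
  classical
  have hjnF : jn ∉ F := fun h => (Finset.disjoint_left.mp hdisj h) (mem_singleton_self jn)
  set P := ∑ j ∈ F, p j with hPdef
  have hP0 : 0 < P := lt_trans hq hPF
  have hqP : q jn ≤ P := le_of_lt hPF
  refine ⟨⟨?_, ?_⟩, ?_, ?_⟩
  · -- lower bound, order ⟨M2, M3, M1⟩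
    intro S hf h12 h23
    exact lowerB F jn p q hjnF hp hq S hf 1 2
      (fun j hj => by have h1 := (hf.2.2.2 j hj).1; have h2 := hp j hj; linarith)
      (fun j hj => (hf.2.2.2 j hj).2)
      (fun j hj => le_refl _)
      h12
  · -- construction, order ⟨M2, M3, M1⟩
    set t : Fin 3 → ℝ := fun i => if i = 0 then q jn + P else if i = 1 then 0 else q jn
      with ht
    have htv0 : t 0 = q jn + P := by simp [ht]
    have htv1 : t 1 = 0 := by simp [ht]
    have htv2 : t 2 = q jn := by simp [ht]
    obtain ⟨S, hfeas, hSn, hmk⟩ := constructS F jn p q hjnF hp hq hF hpq t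
      (by
        intro i
        fin_cases i
        · show (0:ℝ) ≤ t 0; rw [htv0]; linarith
        · show (0:ℝ) ≤ t 1; rw [htv1]
        · show (0:ℝ) ≤ t 2; rw [htv2]; linarith)
      (by rw [htv0]; linarith)
      (Or.inl (by rw [htv1]; linarith))
      (Or.inl (by rw [htv2]; linarith))
      (by
        intro i i' hii
        fin_cases i <;> fin_cases i'
        · exact absurd rfl hii
        · right; show t 1 + q jn ≤ t 0; rw [htv0, htv1]; linarith
        · right; show t 2 + q jn ≤ t 0; rw [htv0, htv2]; linarith
        · left; show t 1 + q jn ≤ t 0; rw [htv0, htv1]; linarith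
        · exact absurd rfl hii
        · left; show t 1 + q jn ≤ t 2; rw [htv1, htv2]; linarith
        · left; show t 2 + q jn ≤ t 0; rw [htv0, htv2]; linarith
        · right; show t 1 + q jn ≤ t 2; rw [htv1, htv2]; linarith
        · exact absurd rfl hii)
      (by
        intro i
        fin_cases i
        · show t 0 + q jn ≤ 2 * q jn + P; rw [htv0]; linarith
        · show t 1 + q jn ≤ 2 * q jn + P; rw [htv1]; linarith
        · show t 2 + q jn ≤ 2 * q jn + P; rw [htv2]; linarith)
      ⟨0, by rw [htv0]; ring⟩
    refine ⟨S, hfeas, ?_, ?_, hmk⟩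
    · rw [hSn 1, hSn 2, htv1, htv2]; linarith
    · rw [hSn 2, hSn 0, htv0, htv2]; linarith
  · -- lower bound, order ⟨M3, M1, M2⟩
    intro S hf h20 h01
    exact lowerB F jn p q hjnF hp hq S hf 0 1
      (fun j hj => le_refl _)
      (fun j hj => (hf.2.2.2 j hj).1)
      (fun j hj => by have h1 := (hf.2.2.2 j hj).2; have h2 := hp j hj; linarith)
      h01
  · -- construction, order ⟨M3, M1, M2⟩
    set t : Fin 3 → ℝ := fun i => if i = 0 then P else if i = 1 then P + q jn else 0
      with ht
    have htv0 : t 0 = P := by simp [ht]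
    have htv1 : t 1 = P + q jn := by simp [ht]
    have htv2 : t 2 = 0 := by simp [ht]
    obtain ⟨S, hfeas, hSn, hmk⟩ := constructS F jn p q hjnF hp hq hF hpq t
      (by
        intro i
        fin_cases i
        · show (0:ℝ) ≤ t 0; rw [htv0]; linarith
        · show (0:ℝ) ≤ t 1; rw [htv1]; linarith
        · show (0:ℝ) ≤ t 2; rw [htv2])
      (by rw [htv0])
      (Or.inr (by rw [htv1]; linarith))
      (Or.inl (by rw [htv2]; linarith))
      (by
        intro i i' hii
        fin_cases i <;> fin_cases i'
        · exact absurd rfl hii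
        · left; show t 0 + q jn ≤ t 1; rw [htv0, htv1]
        · right; show t 2 + q jn ≤ t 0; rw [htv0, htv2]; linarith
        · right; show t 0 + q jn ≤ t 1; rw [htv0, htv1]
        · exact absurd rfl hii
        · right; show t 2 + q jn ≤ t 1; rw [htv1, htv2]; linarith
        · left; show t 2 + q jn ≤ t 0; rw [htv0, htv2]; linarith
        · left; show t 2 + q jn ≤ t 1; rw [htv1, htv2]; linarith
        · exact absurd rfl hii)
      (by
        intro i
        fin_cases i
        · show t 0 + q jn ≤ 2 * q jn + P; rw [htv0]; linarith
        · show t 1 + q jn ≤ 2 * q jn + P; rw [htv1]; linarith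
        · show t 2 + q jn ≤ 2 * q jn + P; rw [htv2]; linarith)
      ⟨1, by rw [htv1]; ring⟩
    refine ⟨S, hfeas, ?_, ?_, hmk⟩
    · rw [hSn 2, hSn 0, htv0, htv2]; linarith
    · rw [hSn 0, hSn 1, htv0, htv1]
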